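/- Let U : ℝ → [0,∞) be convex and finite on [0,1], let 0 = x̄₀ < ... < x̄ₙ = 1, let ρ̄ be a probability density supported on [0,1] with ∫_{x̄_{i-1}}^{x̄_i} ρ̄ = 1/n for each i, and let φ̄ be the piecewise constant density equal to (1/n)/(x̄_i - x̄_{i-1}) on (x̄_{i-1}, x̄_i). Then ∫₀¹ U (φ̄ - ρ̄) dx ≤ (U(0) + U(1))/n. -/

import Mathlib

open MeasureTheory Set intervalIntegral

theorem stmt7 (U : ℝ → ℝ) (hU : ConvexOn ℝ Set.univ U) (hU0 : ∀ x, 0 ≤ U x)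
    (n : ℕ) (hn : 1 ≤ n) (xb : ℕ → ℝ) (ρ φ : ℝ → ℝ)
    (h0 : xb 0 = 0) (h1 : xb n = 1)
    (hmono : ∀ i j, i < j → j ≤ n → xb i < xb j)
    (hρ0 : ∀ x, 0 ≤ ρ x) (hρsupp : ∀ x, x ∉ Set.Icc (0:ℝ) 1 → ρ x = 0)
    (hρint : MeasureTheory.IntegrableOn ρ (Set.Icc (0:ℝ) 1))
    (hcell : ∀ i, 1 ≤ i → i ≤ n → ∫ x in (xb (i-1))..(xb i), ρ x = 1/(n:ℝ))
    (hφ : ∀ i, 1 ≤ i → i ≤ n → ∀ x ∈ Set.Ioo (xb (i-1)) (xb i),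
        φ x = (1/(n:ℝ)) / (xb i - xb (i-1))) :
    (∫ x in (0:ℝ)..1, U x * (φ x - ρ x)) ≤ (U 0 + U 1)/n := by
  have hUcont : Continuous U := by
    have h := hU.continuousOn isOpen_univ
    rw [← continuousOn_univ]; exact h
  obtain ⟨t, ht01, htmin⟩ := (isCompact_Icc : IsCompact (Icc (0:ℝ) 1)).exists_isMinOn
    (by exact ⟨0, by norm_num⟩) hUcont.continuousOn
  have htm : ∀ x ∈ Icc (0:ℝ) 1, U t ≤ U x := fun x hx => htmin hx
  -- antitone up to t
  have hA : ∀ x y : ℝ, 0 ≤ x → x ≤ y → y ≤ t → U y ≤ U x := by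
    intro x y hx hxy hyt
    have hy1 : y ∈ Icc (0:ℝ) 1 := ⟨hx.trans hxy, hyt.trans ht01.2⟩
    have hx1 : x ∈ Icc (0:ℝ) 1 := ⟨hx, hxy.trans hy1.2⟩
    have hseg : y ∈ segment ℝ x t := by
      rw [segment_eq_Icc (hxy.trans hyt)]; exact ⟨hxy, hyt⟩
    have hmax := hU.le_on_segment (mem_univ x) (mem_univ t) hseg
    rcases le_or_gt (U t) (U x) with h | h
    · rwa [max_eq_left h] at hmax
    · rw [max_eq_right h.le] at hmax
      exact hmax.trans ((htm x hx1))
  have hB : ∀ x y : ℝ, t ≤ x → x ≤ y → y ≤ 1 → U x ≤ U y := by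
    intro x y htx hxy hy1
    have hx1 : x ∈ Icc (0:ℝ) 1 := ⟨ht01.1.trans htx, hxy.trans hy1⟩
    have hy1' : y ∈ Icc (0:ℝ) 1 := ⟨hx1.1.trans hxy, hy1⟩
    have hseg : x ∈ segment ℝ t y := by
      rw [segment_eq_Icc (htx.trans hxy)]; exact ⟨htx, hxy⟩
    have hmax := hU.le_on_segment (mem_univ t) (mem_univ y) hseg
    rcases le_or_gt (U t) (U y) with h | h
    · rwa [max_eq_right h] at hmax
    · rw [max_eq_left h.le] at hmax
      exact hmax.trans ((htm y hy1'))
  -- clamp lemma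
  have hclamp : ∀ a b x : ℝ, 0 ≤ a → a ≤ x → x ≤ b → b ≤ 1 →
      U (max a (min b t)) ≤ U x := by
    intro a b x ha0 hax hxb hb1
    rcases le_total x t with hxt | htx
    · exact hA x (max a (min b t)) (ha0.trans hax)
        (le_trans (le_min hxb hxt) (le_max_right _ _))
        (max_le (hax.trans hxt) (min_le_right b t))
    · exact hB (max a (min b t)) x
        (le_trans (le_min (htx.trans hxb) le_rfl) (le_max_right _ _))
        (max_le hax ((min_le_right b t).trans htx))
        (hxb.trans hb1)
  set N : ℝ → ℝ := fun x => U (min x t) with hN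
  set P : ℝ → ℝ := fun x => U (max x t) with hP
  -- per-cell oscillation bound
  have hosc : ∀ a b : ℝ, 0 ≤ a → a < b → b ≤ 1 →
      max (U a) (U b) - U (max a (min b t)) ≤ (N a - N b) + (P b - P a) := by
    intro a b ha0 hab hb1
    rcases le_total b t with hbt | htb
    · have hUba : U b ≤ U a := hA a b ha0 hab.le hbt
      have h1 : min b t = b := min_eq_left hbt
      have h2 : max a b = b := max_eq_right hab.le
      have h3 : min a t = a := min_eq_left (hab.le.trans hbt)
      have h4 : max a t = t := max_eq_right (hab.le.trans hbt)
      have h5 : max b t = t := max_eq_right hbt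
      simp only [hN, hP, h1, h2, h3, h4, h5, max_eq_left hUba]
      simp
    rcases le_total t a with hta | hat
    · have hUab : U a ≤ U b := hB a b hta hab.le hb1
      have h1 : min b t = t := min_eq_right (hta.trans hab.le)
      have h2 : max a t = a := max_eq_left hta
      have h3 : min a t = t := min_eq_right hta
      have h4 : max b t = b := max_eq_left (hta.trans hab.le)
      simp only [hN, hP, h1, h2, h3, h4, max_eq_right hUab]
      simp
    · have h1 : min b t = t := min_eq_right htb
      have h2 : max a t = t := max_eq_right hat
      have h3 : min a t = a := min_eq_left hat
      have h4 : max b t = b := max_eq_left htb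
      have hta' : U t ≤ U a := htm a ⟨ha0, hat.trans (ht01.2)⟩
      have htb' : U t ≤ U b := htm b ⟨(ht01.1.trans htb), hb1⟩
      simp only [hN, hP, h1, h2, h3, h4]
      rcases max_cases (U a) (U b) with ⟨h, _⟩ | ⟨h, _⟩ <;> rw [h] <;> linarith
  -- bounds on xb
  have hx01 : ∀ i, i ≤ n → 0 ≤ xb i ∧ xb i ≤ 1 := by
    intro i hi
    constructor
    · rcases Nat.eq_zero_or_pos i with h | h
      · rw [h, h0]
      · rw [← h0]; exact (hmono 0 i h hi).le
    · rcases eq_or_lt_of_le hi with h | h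
      · rw [h, h1]
      · rw [← h1]; exact (hmono i n h le_rfl).le
  -- telescoping sum bound
  have htel : ∑ i ∈ Finset.range n,
      (max (U (xb i)) (U (xb (i+1))) - U (max (xb i) (min (xb (i+1)) t)))
      ≤ U 0 + U 1 := by
    have hb : ∀ i ∈ Finset.range n,
        max (U (xb i)) (U (xb (i+1))) - U (max (xb i) (min (xb (i+1)) t))
        ≤ (N (xb i) - N (xb (i+1))) + (P (xb (i+1)) - P (xb i)) := by
      intro i hi
      rw [Finset.mem_range] at hi
      exact hosc _ _ (hx01 i hi.le).1 (hmono i (i+1) (lt_add_one i) hi)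
        (hx01 (i+1) hi).2
    refine le_trans (Finset.sum_le_sum hb) ?_
    rw [Finset.sum_add_distrib, Finset.sum_range_sub' (fun i => N (xb i)),
      Finset.sum_range_sub (fun i => P (xb i))]
    have e1 : N (xb 0) = U 0 := by rw [h0]; simp [hN, min_eq_left ht01.1]
    have e2 : N (xb n) = U t := by rw [h1]; simp [hN, min_eq_right ht01.2]
    have e3 : P (xb n) = U 1 := by rw [h1]; simp [hP, max_eq_left ht01.2]
    have e4 : P (xb 0) = U t := by rw [h0]; simp [hP, max_eq_right ht01.1]
    rw [e1, e2, e3, e4]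
    have := hU0 t
    linarith
  -- integrability pieces per cell
  have hnpos : (0:ℝ) < n := by exact_mod_cast hn
  have key : ∀ i < n, IntervalIntegrable (fun x => U x * (φ x - ρ x)) volume (xb i) (xb (i+1))
      ∧ (∫ x in (xb i)..(xb (i+1)), U x * (φ x - ρ x))
        ≤ (max (U (xb i)) (U (xb (i+1))) - U (max (xb i) (min (xb (i+1)) t))) / n := by
    intro i hi
    set a := xb i with haa
    set b := xb (i+1) with hbb
    have hab : a < b := hmono i (i+1) (lt_add_one i) hi
    have ha0 : 0 ≤ a := (hx01 i hi.le).1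
    have hb1 : b ≤ 1 := (hx01 (i+1) hi).2
    set c : ℝ := (1/(n:ℝ)) / (b - a) with hc
    have hc0 : 0 ≤ c := by
      apply div_nonneg (by positivity) (by linarith)
    have hcb : c * (b - a) = 1/(n:ℝ) := by
      rw [hc, div_mul_cancel₀]; linarith
    -- φ = c a.e. on the cell
    have hφc : ∀ x ∈ Set.Ioo a b, φ x = c := by
      intro x hx
      have h := hφ (i+1) (by omega) (by omega) x (by simpa using hx)
      rw [hc]
      simpa [one_div] using h
    have hbne : ∀ᵐ x : ℝ ∂volume, x ≠ b := by
      rw [MeasureTheory.ae_iff]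
      simp only [not_not]
      simpa using measure_singleton b
    have hae : ∀ᵐ x ∂(volume : Measure ℝ), x ∈ Set.uIoc a b → U x * φ x = c * U x := by
      filter_upwards [hbne] with x hxb hxI
      rw [uIoc_of_le hab.le] at hxI
      have hx : x ∈ Set.Ioo a b := ⟨hxI.1, lt_of_le_of_ne hxI.2 hxb⟩
      rw [hφc x hx]; ring
    have hUρ : IntervalIntegrable (fun x => U x * ρ x) volume a b := by
      have hρi : IntervalIntegrable ρ volume a b := by
        rw [intervalIntegrable_iff]
        apply hρint.mono_set
        rw [uIoc_of_le hab.le]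
        exact (Set.Ioc_subset_Icc_self).trans (Set.Icc_subset_Icc ha0 hb1)
      exact hρi.continuousOn_mul hUcont.continuousOn
    have hcU : IntervalIntegrable (fun x => c * U x) volume a b :=
      (hUcont.intervalIntegrable a b).const_mul c
    have hUφ : IntervalIntegrable (fun x => U x * φ x) volume a b := by
      rw [intervalIntegrable_iff, uIoc_of_le hab.le]
      have h1 : IntegrableOn (fun x => c * U x) (Set.Ioc a b) volume := by
        have h2 := hcU
        rw [intervalIntegrable_iff, uIoc_of_le hab.le] at h2
        exact h2
      refine h1.congr ?_
      refine (ae_restrict_iff' measurableSet_Ioc).mpr ?_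
      filter_upwards [hbne] with x hxb hxI
      have hx : x ∈ Set.Ioo a b := ⟨hxI.1, lt_of_le_of_ne hxI.2 hxb⟩
      rw [hφc x hx]; ring
    have heq : (fun x => U x * (φ x - ρ x)) = fun x => U x * φ x - U x * ρ x := by
      funext x; ring
    have hsub : IntervalIntegrable (fun x => U x * (φ x - ρ x)) volume a b := by
      rw [heq]; exact hUφ.sub hUρ
    refine ⟨hsub, ?_⟩
    have hsplit : (∫ x in a..b, U x * (φ x - ρ x))
        = (∫ x in a..b, U x * φ x) - ∫ x in a..b, U x * ρ x := by
      rw [heq]; exact intervalIntegral.integral_sub hUφ hUρ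
    set M := max (U a) (U b) with hM
    set m := U (max a (min b t)) with hm
    have hstep1 : (∫ x in a..b, U x * φ x) = ∫ x in a..b, c * U x :=
      intervalIntegral.integral_congr_ae hae
    have hstep2 : (∫ x in a..b, c * U x) ≤ M / n := by
      have hmono2 : (∫ x in a..b, c * U x) ≤ ∫ x in a..b, c * M := by
        refine intervalIntegral.integral_mono_on hab.le hcU
          (intervalIntegrable_const) ?_
        intro x hx
        have hseg : x ∈ segment ℝ a b := by
          rw [segment_eq_Icc hab.le]; exact hx
        have := hU.le_on_segment (mem_univ a) (mem_univ b) hseg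
        exact mul_le_mul_of_nonneg_left this hc0
      have : (∫ x in a..b, c * M) = M / n := by
        rw [intervalIntegral.integral_const, smul_eq_mul]
        rw [div_eq_mul_one_div (M) (n:ℝ)]
        rw [← hcb]; ring
      linarith
    have hstep3 : m / n ≤ ∫ x in a..b, U x * ρ x := by
      have hρi : IntervalIntegrable ρ volume a b := by
        rw [intervalIntegrable_iff]
        apply hρint.mono_set
        rw [uIoc_of_le hab.le]
        exact (Set.Ioc_subset_Icc_self).trans (Set.Icc_subset_Icc ha0 hb1)
      have hmono3 : (∫ x in a..b, m * ρ x) ≤ ∫ x in a..b, U x * ρ x := by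
        refine intervalIntegral.integral_mono_on hab.le (hρi.const_mul m) hUρ ?_
        intro x hx
        exact mul_le_mul_of_nonneg_right
          (hclamp a b x ha0 hx.1 hx.2 hb1) (hρ0 x)
      have hval : (∫ x in a..b, m * ρ x) = m / n := by
        rw [intervalIntegral.integral_const_mul]
        have hc2 : (∫ x in a..b, ρ x) = 1/(n:ℝ) := by
          have := hcell (i+1) (by omega) (by omega)
          simpa using this
        rw [hc2]; ring
      linarith
    rw [hsplit, hstep1]
    have : (M - m) / (n:ℝ) = M/n - m/n := by ring
    rw [this]
    linarith
  -- assemble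
  have hi0 : xb 0 = (0:ℝ) := h0
  have hsum := intervalIntegral.sum_integral_adjacent_intervals
    (f := fun x => U x * (φ x - ρ x)) (μ := volume) (a := xb) (n := n)
    (fun k hk => (key k hk).1)
  rw [h0, h1] at hsum
  rw [← hsum]
  calc ∑ k ∈ Finset.range n, ∫ x in (xb k)..(xb (k+1)), U x * (φ x - ρ x)
      ≤ ∑ k ∈ Finset.range n,
        (max (U (xb k)) (U (xb (k+1))) - U (max (xb k) (min (xb (k+1)) t))) / n := by
        refine Finset.sum_le_sum ?_
        intro k hk
        exact (key k (Finset.mem_range.mp hk)).2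
    _ = (∑ k ∈ Finset.range n,
        (max (U (xb k)) (U (xb (k+1))) - U (max (xb k) (min (xb (k+1)) t)))) / n := by
        rw [Finset.sum_div]
    _ ≤ (U 0 + U 1)/n := by
        gcongr
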